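/- Unitary form of the converse direction of Theorem 2: let n ≥ 1 and let F = (√2)⁻¹ · 1₂ (the matrix form of the maximally entangled two-qubit state). If there exist unitary 2ⁿ×2ⁿ complex matrices U and V, a complex 2×2 matrix M with Tr(M·Mᴴ) = 1 whose Gram matrix M·Mᴴ has eigenvalues s and 1−s with 0 < s < 1, and a complex 2^{n−1}×2^{n−1} matrix Z, such that U · F^{⊗n} · Vᵀ = M ⊗ Z (after the canonical reindexings to Fin 2ⁿ), then s = 1/2. Equivalently: no number of copies of the maximally entangled two-qubit state can be mapped by local unitaries to a non-maximally entangled two-qubit pure state in tensor with any residual bipartite pure state. -/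

import Mathlib

open Matrix Kronecker Polynomial

/-- The `n`-fold Kronecker power of a square matrix `A`, indexed by `Fin n → m`
(the entry at `(i, j)` is `∏ k, A (i k) (j k)`, which is exactly the iterated
Kronecker product `A ⊗ A ⊗ ⋯ ⊗ A` under the canonical identification of the
index types). -/
noncomputable def kronPow {m : Type*} [Fintype m] (A : Matrix m m ℂ) (n : ℕ) :
    Matrix (Fin n → m) (Fin n → m) ℂ :=
  fun i j => ∏ k, A (i k) (j k)

lemma kronPow_smul_one (c : ℂ) (n : ℕ) :
    kronPow (c • (1 : Matrix (Fin 2) (Fin 2) ℂ)) n = c ^ n • 1 := by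
  ext i j
  by_cases hij : i = j
  · subst hij
    simp [kronPow, Matrix.one_apply]
  · obtain ⟨k, hk⟩ := Function.ne_iff.mp hij
    simp only [kronPow, Matrix.smul_apply, Matrix.one_apply, smul_eq_mul]
    rw [Finset.prod_eq_zero (Finset.mem_univ k) (by simp [hk])]
    simp [Matrix.one_apply, hij]

lemma kron_conjTranspose {a b : Type*} [Fintype a] [Fintype b]
    (A : Matrix a a ℂ) (B : Matrix b b ℂ) : (A ⊗ₖ B)ᴴ = Aᴴ ⊗ₖ Bᴴ := by
  ext i j
  simp [Matrix.conjTranspose_apply, kroneckerMap_apply, mul_comm]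

/-- Unitary form of the converse direction of Theorem 2: with
`F = (√2)⁻¹·1₂` the matrix of the maximally entangled two-qubit state, if for some
`n ≥ 1` there exist `2ⁿ×2ⁿ` unitaries `U, V`, a two-qubit pure-state matrix `M`
(`Tr(M·Mᴴ) = 1`) whose Gram matrix has eigenvalues `s` and `1−s` with `0 < s < 1`,
and a matrix `Z` with `U · F^{⊗n} · Vᵀ = M ⊗ Z` (under the canonical reindexings),
then `s = 1/2`. -/
theorem unitary_thm2_converse (n : ℕ) (hn : 1 ≤ n) (s : ℝ) (hs0 : 0 < s) (hs1 : s < 1)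
    (h : ∃ (U V : Matrix (Fin (2 ^ n)) (Fin (2 ^ n)) ℂ)
           (M : Matrix (Fin 2) (Fin 2) ℂ)
           (Z : Matrix (Fin (2 ^ (n - 1))) (Fin (2 ^ (n - 1))) ℂ),
        U * Uᴴ = 1 ∧ V * Vᴴ = 1 ∧
        (M * Mᴴ).trace = 1 ∧
        (M * Mᴴ).charpoly = (X - C (s : ℂ)) * (X - C (1 - (s : ℂ))) ∧
        U * (Matrix.reindex finFunctionFinEquiv finFunctionFinEquiv
              (kronPow (((Real.sqrt 2 : ℂ))⁻¹ • (1 : Matrix (Fin 2) (Fin 2) ℂ)) n)) * Vᵀ =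
          Matrix.reindex
            (finProdFinEquiv.trans (finCongr (by rw [← pow_succ', Nat.sub_add_cancel hn])))
            (finProdFinEquiv.trans (finCongr (by rw [← pow_succ', Nat.sub_add_cancel hn])))
            (M ⊗ₖ Z)) :
    s = 1 / 2 := by
  obtain ⟨U, V, M, Z, hU, hV, htr, hcp, heq⟩ := h
  set c : ℂ := ((Real.sqrt 2 : ℂ))⁻¹ with hc
  set e : Fin 2 × Fin (2 ^ (n-1)) ≃ Fin (2 ^ n) :=
    (finProdFinEquiv.trans (finCongr (by rw [← pow_succ', Nat.sub_add_cancel hn]))) with he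
  -- simplify LHS of heq
  rw [kronPow_smul_one] at heq
  have hre : (Matrix.reindex finFunctionFinEquiv finFunctionFinEquiv
      ((c ^ n) • (1 : Matrix (Fin n → Fin 2) (Fin n → Fin 2) ℂ))) = (c ^ n) • 1 := by
    ext i j
    simp [Matrix.reindex_apply, Matrix.submatrix_apply, Matrix.one_apply,
      EmbeddingLike.apply_eq_iff_eq, Equiv.symm_apply_eq]
  rw [hre] at heq
  have hlhs : U * ((c ^ n) • (1 : Matrix (Fin (2^n)) (Fin (2^n)) ℂ)) * Vᵀ
      = (c ^ n) • (U * Vᵀ) := by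
    rw [Matrix.mul_smul, Matrix.mul_one, Matrix.smul_mul]
  rw [hlhs] at heq
  -- multiply by conj transpose
  have hkey : ((c ^ n) • (U * Vᵀ)) * ((c ^ n) • (U * Vᵀ))ᴴ
      = Matrix.reindex e e ((M * Mᴴ) ⊗ₖ (Z * Zᴴ)) := by
    rw [heq, Matrix.reindex_apply, Matrix.reindex_apply, Matrix.conjTranspose_submatrix,
      Matrix.submatrix_mul_equiv]
    congr 1
    rw [kron_conjTranspose, Matrix.mul_kronecker_mul]
  have hstarc : star c = c := by
    rw [hc]
    simp [← Complex.ofReal_inv]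
  have hVV : Vᵀ * (Vᵀ)ᴴ = 1 := by
    have h2 : Vᴴ * V = 1 := mul_eq_one_comm.mp hV
    have h3 : Vᵀᴴ = Vᴴᵀ := by
      ext i j
      simp [Matrix.conjTranspose_apply, Matrix.transpose_apply]
    rw [h3, ← Matrix.transpose_mul, h2, Matrix.transpose_one]
  have hlhs2 : ((c ^ n) • (U * Vᵀ)) * ((c ^ n) • (U * Vᵀ))ᴴ
      = (c ^ n * c ^ n) • (1 : Matrix (Fin (2^n)) (Fin (2^n)) ℂ) := by
    rw [Matrix.conjTranspose_smul, Matrix.smul_mul, Matrix.mul_smul, smul_smul,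
      star_pow, hstarc]
    congr 1
    rw [Matrix.conjTranspose_mul, Matrix.mul_assoc, ← Matrix.mul_assoc Vᵀ, hVV,
      Matrix.one_mul, hU]
  rw [hlhs2] at hkey
  -- extract entries
  set t : ℂ := c ^ n * c ^ n with ht
  have htne : t ≠ 0 := by
    have : c ≠ 0 := by
      rw [hc]
      simp [Real.sqrt_eq_zero']
    exact mul_ne_zero (pow_ne_zero _ this) (pow_ne_zero _ this)
  have hentry : ∀ (i i' : Fin 2) (j j' : Fin (2 ^ (n-1))),
      (if i = i' ∧ j = j' then t else 0) = (M * Mᴴ) i i' * (Z * Zᴴ) j j' := by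
    intro i i' j j'
    have := congrFun (congrFun hkey (e (i, j))) (e (i', j'))
    simpa [Matrix.reindex_apply, Matrix.submatrix_apply, Matrix.smul_apply,
      Matrix.one_apply, kroneckerMap_apply, EmbeddingLike.apply_eq_iff_eq,
      mul_ite, mul_one, mul_zero, Prod.ext_iff] using this
  have h2pos : 0 < 2 ^ (n - 1) := Nat.pow_pos (by norm_num)
  set j0 : Fin (2 ^ (n-1)) := ⟨0, h2pos⟩ with hj0
  set P := M * Mᴴ with hP
  set Q := Z * Zᴴ with hQ
  have h00 : P 0 0 * Q j0 j0 = t := by simpa using (hentry 0 0 j0 j0).symm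
  have h11 : P 1 1 * Q j0 j0 = t := by simpa using (hentry 1 1 j0 j0).symm
  have h01 : P 0 1 * Q j0 j0 = 0 := by simpa using (hentry 0 1 j0 j0).symm
  have h10 : P 1 0 * Q j0 j0 = 0 := by simpa using (hentry 1 0 j0 j0).symm
  have hQne : Q j0 j0 ≠ 0 := by
    intro h0
    rw [h0, mul_zero] at h00
    exact htne h00.symm
  have hPd : P 0 0 = P 1 1 := mul_right_cancel₀ hQne (h00.trans h11.symm)
  have hP01 : P 0 1 = 0 := by
    rcases mul_eq_zero.mp h01 with h' | h'
    · exact h'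
    · exact absurd h' hQne
  have hP10 : P 1 0 = 0 := by
    rcases mul_eq_zero.mp h10 with h' | h'
    · exact h'
    · exact absurd h' hQne
  have htr2 : P 0 0 + P 1 1 = 1 := by rw [← Matrix.trace_fin_two]; exact htr
  have hP00 : P 0 0 = 1/2 := by
    rw [← hPd] at htr2
    linear_combination htr2 / 2
  have hP11 : P 1 1 = 1/2 := hPd ▸ hP00
  -- compute charpoly
  have hcp2 : P.charpoly = (X - C (1/2 : ℂ)) * (X - C (1/2 : ℂ)) := by
    rw [Matrix.charpoly, Matrix.det_fin_two]
    rw [Matrix.charmatrix_apply_eq, Matrix.charmatrix_apply_eq,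
      Matrix.charmatrix_apply_ne _ _ _ (by norm_num : (0:Fin 2) ≠ 1),
      Matrix.charmatrix_apply_ne _ _ _ (by norm_num : (1:Fin 2) ≠ 0),
      hP00, hP11, hP01, hP10]
    simp
  rw [hcp2] at hcp
  have := congrArg (Polynomial.eval ((1:ℂ)/2)) hcp
  simp only [Polynomial.eval_mul, Polynomial.eval_sub, Polynomial.eval_X,
    Polynomial.eval_C, sub_self, mul_zero, zero_mul] at this
  have hcs : ((1:ℂ)/2 - s) * ((1:ℂ)/2 - (1 - s)) = 0 := this.symm
  rcases mul_eq_zero.mp hcs with h' | h'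
  · have hsc : (s : ℂ) = 1/2 := by linear_combination -h'
    have : (s : ℂ) = ((1/2 : ℝ) : ℂ) := by push_cast; exact hsc
    exact Complex.ofReal_injective this
  · have hsc : (s : ℂ) = 1/2 := by linear_combination h'
    have : (s : ℂ) = ((1/2 : ℝ) : ℂ) := by push_cast; exact hsc
    exact Complex.ofReal_injective this
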